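/- Let λ ≥ 2 be a cardinal. Let τ_mi be the topology on the λ-polycyclic monoid P_λ in which every nonzero element is isolated and the sets U_A(0) = {a⁻¹b : a, b ∈ M_λ \ A} ∪ {0}, for A ranging over finite subsets of the free monoid M_λ, form a base of neighborhoods at 0. Then τ_mi is a Hausdorff topology and (P_λ, τ_mi) is a topological inverse semigroup, i.e., multiplication and inversion are continuous with respect to τ_mi. -/

import Mathlib

universe u v

/-- An inverse semigroup: every element has a unique (von Neumann) inverse. -/
class InverseSemigroup (S : Type u) extends Semigroup S, Inv S where
  mul_inv_mul : ∀ a : S, a * a⁻¹ * a = a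
  inv_mul_inv : ∀ a : S, a⁻¹ * a * a⁻¹ = a⁻¹
  inv_unique : ∀ a b : S, a * b * a = a → b * a * b = b → b = a⁻¹

/-- The λ-polycyclic monoid over the index type `ι` (of cardinality λ), realized as
`(M_λ × M_λ) ∪ {0}` where `M_λ = FreeMonoid ι` is the free monoid on λ generators;
the pair `(a, b)` encodes the element `a⁻¹b` and `none` is the zero. -/
abbrev PolyMon (ι : Type u) : Type u := Option (FreeMonoid ι × FreeMonoid ι)

/-- The nonzero element `a⁻¹b` of the polycyclic monoid. -/
def polyEl {ι : Type u} (a b : FreeMonoid ι) : PolyMon ι := some (a, b)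

instance {ι : Type u} : Zero (PolyMon ι) := ⟨none⟩

instance {ι : Type u} : One (PolyMon ι) := ⟨polyEl 1 1⟩

open Classical in
/-- Multiplication of the polycyclic monoid:
`a⁻¹b · c⁻¹d = (c₁a)⁻¹d` if `c = c₁b`; `= a⁻¹(b₁d)` if `b = b₁c`; `= 0` otherwise,
and `0` is a two-sided zero. -/
noncomputable def polyMul {ι : Type u} (x y : PolyMon ι) : PolyMon ι :=
  Option.bind x fun p => Option.bind y fun q =>
    if h : ∃ c₁ : FreeMonoid ι, q.1 = c₁ * p.2 then some (Classical.choose h * p.1, q.2)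
    else if h' : ∃ b₁ : FreeMonoid ι, p.2 = b₁ * q.1 then some (p.1, Classical.choose h' * q.2)
    else none

noncomputable instance {ι : Type u} : Mul (PolyMon ι) := ⟨polyMul⟩

/-- Inversion of the polycyclic monoid: `(a⁻¹b)⁻¹ = b⁻¹a` and `0⁻¹ = 0`. -/
instance {ι : Type u} : Inv (PolyMon ι) :=
  ⟨fun x => Option.map (fun p => (p.2, p.1)) x⟩

/-- The basic neighbourhood `U_A(0) = {a⁻¹b : a, b ∈ M_λ \ A} ∪ {0}` of zero. -/
def U0 {ι : Type u} (A : Set (FreeMonoid ι)) : Set (PolyMon ι) :=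
  {x | x = 0 ∨ ∃ a b : FreeMonoid ι, a ∉ A ∧ b ∉ A ∧ x = polyEl a b}

/-- The topology `τ_mi` on the polycyclic monoid: all nonzero elements are isolated and
the sets `U_A(0)`, for `A` a finite subset of the free monoid, form a base at `0`. -/
def tauMi (ι : Type u) : TopologicalSpace (PolyMon ι) :=
  TopologicalSpace.generateFrom
    ({s | ∃ x : PolyMon ι, x ≠ 0 ∧ s = {x}} ∪
     {s | ∃ A : Set (FreeMonoid ι), A.Finite ∧ s = U0 A})

-- AUX
namespace PolyAux

variable {ι : Type u}

lemma polyEl_ne_zero (a b : FreeMonoid ι) : polyEl a b ≠ 0 := fun h => Option.some_ne_none _ h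

lemma polyEl_inj {a b c d : FreeMonoid ι} (h : polyEl a b = polyEl c d) : a = c ∧ b = d := by
  simpa [polyEl, Prod.ext_iff] using h

lemma zero_mul' (y : PolyMon ι) : (0 : PolyMon ι) * y = 0 := rfl

lemma mul_zero' (x : PolyMon ι) : x * (0 : PolyMon ι) = 0 := by cases x <;> rfl

open Classical in
lemma mul_def (a b c d : FreeMonoid ι) :
    polyEl a b * polyEl c d =
      if h : ∃ c₁ : FreeMonoid ι, c = c₁ * b then some (Classical.choose h * a, d)
      else if h' : ∃ b₁ : FreeMonoid ι, b = b₁ * c then some (a, Classical.choose h' * d)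
      else none := rfl

lemma mul_cases (a b c d : FreeMonoid ι) :
    (∃ c₁, c = c₁ * b ∧ polyEl a b * polyEl c d = polyEl (c₁ * a) d) ∨
    (∃ b₁, b = b₁ * c ∧ polyEl a b * polyEl c d = polyEl a (b₁ * d)) ∨
    polyEl a b * polyEl c d = 0 := by
  by_cases h : ∃ c₁ : FreeMonoid ι, c = c₁ * b
  · exact Or.inl ⟨Classical.choose h, Classical.choose_spec h, by rw [mul_def, dif_pos h]; rfl⟩
  by_cases h' : ∃ b₁ : FreeMonoid ι, b = b₁ * c
  · exact Or.inr <| Or.inl ⟨Classical.choose h', Classical.choose_spec h', by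
      rw [mul_def, dif_neg h, dif_pos h']; rfl⟩
  · exact Or.inr <| Or.inr <| by rw [mul_def, dif_neg h, dif_neg h']; rfl

end PolyAux

namespace PolyAux2
open PolyAux TopologicalSpace

variable {ι : Type u}

def suffOf (w : FreeMonoid ι) : Set (FreeMonoid ι) := {v | ∃ u, w = u * v}

lemma suffOf_finite (w : FreeMonoid ι) : (suffOf w).Finite := by
  have hsub : suffOf w ⊆ FreeMonoid.toList ⁻¹' {l | l ∈ w.toList.tails} := by
    rintro v ⟨u, rfl⟩
    simp only [Set.mem_preimage, Set.mem_setOf_eq, List.mem_tails]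
    exact ⟨u.toList, rfl⟩
  exact Set.Finite.subset
    (Set.Finite.preimage (FreeMonoid.toList.injective.injOn) (List.finite_toSet _)) hsub

lemma self_mem_suffOf (w : FreeMonoid ι) : w ∈ suffOf w := ⟨1, (one_mul w).symm⟩

def suffSet (A : Set (FreeMonoid ι)) : Set (FreeMonoid ι) := ⋃ α ∈ A, suffOf α

lemma suffSet_finite {A : Set (FreeMonoid ι)} (hA : A.Finite) : (suffSet A).Finite :=
  hA.biUnion fun α _ => suffOf_finite α

lemma subset_suffSet (A : Set (FreeMonoid ι)) : A ⊆ suffSet A := fun α hα =>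
  Set.mem_biUnion hα (self_mem_suffOf α)

lemma mem_suffSet_of {A : Set (FreeMonoid ι)} {u v : FreeMonoid ι} (h : u * v ∈ A) :
    v ∈ suffSet A := Set.mem_biUnion h ⟨u, rfl⟩

lemma isOpen_singleton {x : PolyMon ι} (hx : x ≠ 0) : (tauMi ι).IsOpen {x} :=
  isOpen_generateFrom_of_mem (Or.inl ⟨x, hx, rfl⟩)

lemma isOpen_U0 {A : Set (FreeMonoid ι)} (hA : A.Finite) : (tauMi ι).IsOpen (U0 A) :=
  isOpen_generateFrom_of_mem (Or.inr ⟨A, hA, rfl⟩)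

lemma zero_mem_U0 (A : Set (FreeMonoid ι)) : (0 : PolyMon ι) ∈ U0 A := Or.inl rfl

lemma polyEl_mem_U0 {A : Set (FreeMonoid ι)} {a b : FreeMonoid ι}
    (ha : a ∉ A) (hb : b ∉ A) : polyEl a b ∈ U0 A := Or.inr ⟨a, b, ha, hb, rfl⟩

lemma mem_U0_elim {A : Set (FreeMonoid ι)} {a b : FreeMonoid ι}
    (h : polyEl a b ∈ U0 A) : a ∉ A ∧ b ∉ A := by
  rcases h with h | ⟨a', b', ha', hb', h⟩
  · exact absurd h (polyEl_ne_zero a b)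
  · obtain ⟨rfl, rfl⟩ := polyEl_inj h
    exact ⟨ha', hb'⟩

lemma inv_invol (x : PolyMon ι) : x⁻¹⁻¹ = x := by cases x <;> rfl

lemma inv_zero' : (0 : PolyMon ι)⁻¹ = 0 := rfl

lemma inv_polyEl (a b : FreeMonoid ι) : (polyEl a b)⁻¹ = polyEl b a := rfl

lemma inv_ne_zero {x : PolyMon ι} (hx : x ≠ 0) : x⁻¹ ≠ 0 := by
  cases x
  · exact absurd rfl hx
  · exact fun h => Option.some_ne_none _ h

lemma inv_preimage_singleton (z : PolyMon ι) :
    (fun x : PolyMon ι => x⁻¹) ⁻¹' {z} = {z⁻¹} := by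
  ext x
  simp only [Set.mem_preimage, Set.mem_singleton_iff]
  constructor
  · rintro rfl; exact (inv_invol x).symm
  · rintro rfl; exact inv_invol z

lemma mem_U0_inv {A : Set (FreeMonoid ι)} {x : PolyMon ι} (h : x ∈ U0 A) : x⁻¹ ∈ U0 A := by
  rcases h with rfl | ⟨a, b, ha, hb, rfl⟩
  · exact zero_mem_U0 A
  · rw [inv_polyEl]; exact polyEl_mem_U0 hb ha

lemma inv_preimage_U0 (A : Set (FreeMonoid ι)) :
    (fun x : PolyMon ι => x⁻¹) ⁻¹' (U0 A) = U0 A := by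
  ext x
  constructor
  · intro h; simpa [inv_invol] using mem_U0_inv h
  · exact mem_U0_inv

lemma mul_ne_zero_parts {x y : PolyMon ι} (h : x * y ≠ 0) : x ≠ 0 ∧ y ≠ 0 := by
  constructor
  · rintro rfl; exact h (zero_mul' y)
  · rintro rfl; exact h (mul_zero' x)

end PolyAux2

namespace PolyAux3
open PolyAux PolyAux2 TopologicalSpace

variable {ι : Type u}

/-- products of two elements near zero land in `U0 A`. -/
lemma mul_mem_zero_zero {A : Set (FreeMonoid ι)} {x y : PolyMon ι}
    (hx : x ∈ U0 (suffSet A)) (hy : y ∈ U0 (suffSet A)) : x * y ∈ U0 A := by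
  rcases hx with rfl | ⟨a, b, ha, hb, rfl⟩
  · rw [zero_mul']; exact zero_mem_U0 A
  rcases hy with rfl | ⟨c, d, hc, hd, rfl⟩
  · rw [mul_zero']; exact zero_mem_U0 A
  rcases mul_cases a b c d with ⟨c₁, hcc, heq⟩ | ⟨b₁, hbb, heq⟩ | heq
  · rw [heq]
    refine polyEl_mem_U0 (fun hmem => ha (mem_suffSet_of hmem)) fun hd' => hd (subset_suffSet A hd')
  · rw [heq]
    refine polyEl_mem_U0 (fun ha' => ha (subset_suffSet A ha')) fun hmem => hd (mem_suffSet_of hmem)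
  · rw [heq]; exact zero_mem_U0 A

/-- the neighbourhood of zero adapted to right multiplication by `polyEl c d`. -/
def Bleft (A : Set (FreeMonoid ι)) (c d : FreeMonoid ι) : Set (FreeMonoid ι) :=
  suffSet A ∪ suffOf c ∪ (fun t => t * c) '' {t | t * d ∈ A}

lemma Bleft_finite {A : Set (FreeMonoid ι)} (hA : A.Finite) (c d : FreeMonoid ι) :
    (Bleft A c d).Finite := by
  refine ((suffSet_finite hA).union (suffOf_finite c)).union (Set.Finite.image _ ?_)
  exact Set.Finite.preimage (mul_left_injective d).injOn hA

lemma mul_mem_zero_right {A : Set (FreeMonoid ι)} {x : PolyMon ι} {c d : FreeMonoid ι}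
    (hx : x ∈ U0 (Bleft A c d)) : x * polyEl c d ∈ U0 A := by
  rcases hx with rfl | ⟨a, b, ha, hb, rfl⟩
  · rw [zero_mul']; exact zero_mem_U0 A
  rcases mul_cases a b c d with ⟨c₁, hcc, heq⟩ | ⟨b₁, hbb, heq⟩ | heq
  · exact absurd (Or.inl (Or.inr ⟨c₁, hcc⟩)) hb
  · rw [heq]
    refine polyEl_mem_U0 (fun ha' => ha (Or.inl (Or.inl (subset_suffSet A ha')))) ?_
    intro hmem
    exact hb (Or.inr ⟨b₁, hmem, hbb.symm⟩)
  · rw [heq]; exact zero_mem_U0 A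

def Bright (A : Set (FreeMonoid ι)) (a b : FreeMonoid ι) : Set (FreeMonoid ι) :=
  suffSet A ∪ suffOf b ∪ (fun t => t * b) '' {t | t * a ∈ A}

lemma Bright_finite {A : Set (FreeMonoid ι)} (hA : A.Finite) (a b : FreeMonoid ι) :
    (Bright A a b).Finite := by
  refine ((suffSet_finite hA).union (suffOf_finite b)).union (Set.Finite.image _ ?_)
  exact Set.Finite.preimage (mul_left_injective a).injOn hA

lemma mul_mem_zero_left {A : Set (FreeMonoid ι)} {y : PolyMon ι} {a b : FreeMonoid ι}
    (hy : y ∈ U0 (Bright A a b)) : polyEl a b * y ∈ U0 A := by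
  rcases hy with rfl | ⟨c, d, hc, hd, rfl⟩
  · rw [mul_zero']; exact zero_mem_U0 A
  rcases mul_cases a b c d with ⟨c₁, hcc, heq⟩ | ⟨b₁, hbb, heq⟩ | heq
  · rw [heq]
    refine polyEl_mem_U0 ?_ fun hd' => hd (Or.inl (Or.inl (subset_suffSet A hd')))
    intro hmem
    exact hc (Or.inr ⟨c₁, hmem, hcc.symm⟩)
  · exact absurd (Or.inl (Or.inr ⟨b₁, hbb⟩)) hc
  · rw [heq]; exact zero_mem_U0 A

end PolyAux3

namespace PolyAux4
open PolyAux PolyAux2 PolyAux3 TopologicalSpace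

variable {ι : Type u}

lemma exists_polyEl {x : PolyMon ι} (hx : x ≠ 0) : ∃ a b, x = polyEl a b := by
  cases x with
  | none => exact absurd rfl hx
  | some p => exact ⟨p.1, p.2, rfl⟩

end PolyAux4


open PolyAux PolyAux2 PolyAux3 PolyAux4 TopologicalSpace

/-- For λ ≥ 2, the topology `τ_mi` on the λ-polycyclic monoid `P_λ` (all nonzero elements
isolated, the sets `U_A(0)` for finite `A ⊆ M_λ` a base at `0`) is Hausdorff and makes
`P_λ` a topological inverse semigroup: multiplication and inversion are continuous. -/
theorem statement_12 (ι : Type u) [Nontrivial ι] :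
    @T2Space (PolyMon ι) (tauMi ι) ∧
    @ContinuousMul (PolyMon ι) (tauMi ι) _ ∧
    @ContinuousInv (PolyMon ι) (tauMi ι) _ := by
  letI : TopologicalSpace (PolyMon ι) := tauMi ι
  refine ⟨⟨fun x y hxy => ?_⟩, ⟨?_⟩, ⟨?_⟩⟩
  · -- T2
    by_cases hx : x = 0
    · subst hx
      have hy : y ≠ 0 := fun h => hxy h.symm
      obtain ⟨c, d, rfl⟩ := exists_polyEl hy
      refine ⟨U0 {c}, {polyEl c d}, isOpen_U0 (Set.finite_singleton c),
        isOpen_singleton hy, zero_mem_U0 _, rfl, ?_⟩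
      rw [Set.disjoint_singleton_right]
      intro hmem
      exact (mem_U0_elim hmem).1 rfl
    · by_cases hy : y = 0
      · subst hy
        obtain ⟨a, b, rfl⟩ := exists_polyEl hx
        refine ⟨{polyEl a b}, U0 {a}, isOpen_singleton hx,
          isOpen_U0 (Set.finite_singleton a), rfl, zero_mem_U0 _, ?_⟩
        rw [Set.disjoint_singleton_left]
        intro hmem
        exact (mem_U0_elim hmem).1 rfl
      · exact ⟨{x}, {y}, isOpen_singleton hx, isOpen_singleton hy, rfl, rfl,
          Set.disjoint_singleton.mpr hxy⟩
  · -- ContinuousMul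
    refine continuous_generateFrom_iff.mpr ?_
    rintro s (⟨z, hz, rfl⟩ | ⟨A, hA, rfl⟩)
    · rw [isOpen_prod_iff]
      intro x y hxy
      have hxy' : x * y = z := hxy
      have hparts := mul_ne_zero_parts (hxy' ▸ hz)
      refine ⟨{x}, {y}, isOpen_singleton hparts.1, isOpen_singleton hparts.2, rfl, rfl, ?_⟩
      rintro ⟨x', y'⟩ ⟨h1, h2⟩
      cases h1; cases h2
      exact hxy'
    · rw [isOpen_prod_iff]
      intro x y hxy
      have hxy' : x * y ∈ U0 A := hxy
      by_cases hx : x = 0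
      · subst hx
        by_cases hy : y = 0
        · subst hy
          refine ⟨U0 (suffSet A), U0 (suffSet A), isOpen_U0 (suffSet_finite hA),
            isOpen_U0 (suffSet_finite hA), zero_mem_U0 _, zero_mem_U0 _, ?_⟩
          rintro ⟨x', y'⟩ ⟨h1, h2⟩
          exact mul_mem_zero_zero h1 h2
        · obtain ⟨c, d, rfl⟩ := exists_polyEl hy
          refine ⟨U0 (Bleft A c d), {polyEl c d}, isOpen_U0 (Bleft_finite hA c d),
            isOpen_singleton hy, zero_mem_U0 _, rfl, ?_⟩
          rintro ⟨x', y'⟩ ⟨h1, h2⟩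
          cases h2
          exact mul_mem_zero_right h1
      · by_cases hy : y = 0
        · subst hy
          obtain ⟨a, b, rfl⟩ := exists_polyEl hx
          refine ⟨{polyEl a b}, U0 (Bright A a b), isOpen_singleton hx,
            isOpen_U0 (Bright_finite hA a b), rfl, zero_mem_U0 _, ?_⟩
          rintro ⟨x', y'⟩ ⟨h1, h2⟩
          cases h1
          exact mul_mem_zero_left h2
        · refine ⟨{x}, {y}, isOpen_singleton hx, isOpen_singleton hy, rfl, rfl, ?_⟩
          rintro ⟨x', y'⟩ ⟨h1, h2⟩
          cases h1; cases h2
          exact hxy'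
  · -- ContinuousInv
    refine continuous_generateFrom_iff.mpr ?_
    rintro s (⟨z, hz, rfl⟩ | ⟨A, hA, rfl⟩)
    · rw [inv_preimage_singleton]
      exact isOpen_singleton (inv_ne_zero hz)
    · rw [inv_preimage_U0]
      exact isOpen_U0 hA
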